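/- For any probability space (X, 𝓜, μ) and events A1, A2, A3, A4 ∈ 𝓜, setting p_i = μ(A_i) and p_ij = μ(A_i ∩ A_j), the Clauser–Horne inequality -1 ≤ p14 - p13 + p23 + p24 - p2 - p4 ≤ 0 holds. -/

import Mathlib

open MeasureTheory

theorem clauser_horne
    {X : Type*} [MeasurableSpace X] (μ : Measure X) [IsProbabilityMeasure μ]
    (A₁ A₂ A₃ A₄ : Set X)
    (h₁ : MeasurableSet A₁) (h₂ : MeasurableSet A₂)
    (h₃ : MeasurableSet A₃) (h₄ : MeasurableSet A₄) :
    -1 ≤ (μ (A₁ ∩ A₄)).toReal - (μ (A₁ ∩ A₃)).toReal + (μ (A₂ ∩ A₃)).toReal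
        + (μ (A₂ ∩ A₄)).toReal - (μ A₂).toReal - (μ A₄).toReal ∧
    (μ (A₁ ∩ A₄)).toReal - (μ (A₁ ∩ A₃)).toReal + (μ (A₂ ∩ A₃)).toReal
        + (μ (A₂ ∩ A₄)).toReal - (μ A₂).toReal - (μ A₄).toReal ≤ 0 := by
  set f : X → ℝ := fun x =>
    (A₁ ∩ A₄).indicator 1 x - (A₁ ∩ A₃).indicator 1 x + (A₂ ∩ A₃).indicator 1 x
      + (A₂ ∩ A₄).indicator 1 x - A₂.indicator 1 x - A₄.indicator 1 x with hf
  have hfb : ∀ x, -1 ≤ f x ∧ f x ≤ 0 := by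
    intro x
    classical
    simp only [hf, Set.indicator_apply, Set.mem_inter_iff, Pi.one_apply]
    by_cases m1 : x ∈ A₁ <;> by_cases m2 : x ∈ A₂ <;> by_cases m3 : x ∈ A₃ <;>
      by_cases m4 : x ∈ A₄ <;> simp [m1, m2, m3, m4] <;> norm_num
  have hint : ∀ s : Set X, MeasurableSet s →
      Integrable (s.indicator (1 : X → ℝ)) μ := fun s hs =>
    (integrable_const (1 : ℝ)).indicator hs
  have i14 := hint _ (h₁.inter h₄)
  have i13 := hint _ (h₁.inter h₃)
  have i23 := hint _ (h₂.inter h₃)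
  have i24 := hint _ (h₂.inter h₄)
  have hfi : Integrable f μ :=
    (((((i14.sub i13).add i23).add i24).sub (hint _ h₂)).sub (hint _ h₄))
  have hI : ∫ x, f x ∂μ = (μ (A₁ ∩ A₄)).toReal - (μ (A₁ ∩ A₃)).toReal
      + (μ (A₂ ∩ A₃)).toReal + (μ (A₂ ∩ A₄)).toReal - (μ A₂).toReal - (μ A₄).toReal := by
    simp only [hf]
    rw [integral_sub (by exact ((((i14.sub i13).add i23).add i24).sub (hint _ h₂))) (hint _ h₄),
        integral_sub (by exact (((i14.sub i13).add i23).add i24)) (hint _ h₂),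
        integral_add (by exact ((i14.sub i13).add i23)) i24,
        integral_add (by exact (i14.sub i13)) i23,
        integral_sub i14 i13]
    simp [integral_indicator_one, h₁.inter h₄, h₁.inter h₃, h₂.inter h₃, h₂.inter h₄, h₂, h₄]
    rfl
  rw [← hI]
  constructor
  · have : ∫ (_ : X), (-1 : ℝ) ∂μ ≤ ∫ x, f x ∂μ :=
      integral_mono (integrable_const _) hfi fun x => (hfb x).1
    simpa using this
  · exact integral_nonpos fun x => (hfb x).2
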